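/- Let q ≥ 0 and t > 0. For every φ ∈ L¹(ℝ), the function U_q(t)φ satisfies the dispersive estimate ‖U_q(t)φ‖_{L^∞} ≤ √(2/π) · t^{−1/2} · ‖φ‖_{L¹}. -/

import Mathlib

open Complex MeasureTheory Real Set

/-- The operator `𝓛₊[φ](x) = φ(x) − q·1₋(x) e^{qx} ∫_x^{−x} e^{q|y|} φ(y) dy`. -/
noncomputable def Lplus (q : ℝ) (φ : ℝ → ℂ) (x : ℝ) : ℂ :=
  φ x - (if x < 0 then (1 : ℂ) else 0) * q * Real.exp (q * x) *
    ∫ y in x..(-x), (Real.exp (q * |y|) : ℂ) * φ y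

/-- The operator `𝓛₋[φ](x) = φ(x) − q·1₊(x) e^{−qx} ∫_{−x}^{x} e^{q|y|} φ(y) dy`. -/
noncomputable def Lminus (q : ℝ) (φ : ℝ → ℂ) (x : ℝ) : ℂ :=
  φ x - (if 0 ≤ x then (1 : ℂ) else 0) * q * Real.exp (-(q * x)) *
    ∫ y in (-x)..x, (Real.exp (q * |y|) : ℂ) * φ y

/-- The propagator `U_q(t)` of the Schrödinger equation with repulsive delta
potential, given by the explicit formula
`(U_q(t)φ)(x) = (e^{−iπ/4}/√(2π)) t^{−1/2} ∫ e^{i(x−y)²/(2t)} 𝓛₊[φ](y) dy` for `x ≥ 0`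
and the same expression with `𝓛₋` for `x < 0`. -/
noncomputable def Uq (q t : ℝ) (φ : ℝ → ℂ) (x : ℝ) : ℂ :=
  Complex.exp (-(I * π / 4)) / (Real.sqrt (2 * π) : ℂ) * ((Real.sqrt t : ℝ) : ℂ)⁻¹ *
    (if 0 ≤ x then ∫ y : ℝ, Complex.exp (I * ((x : ℂ) - y) ^ 2 / (2 * t)) * Lplus q φ y
     else ∫ y : ℝ, Complex.exp (I * ((x : ℂ) - y) ^ 2 / (2 * t)) * Lminus q φ y)

lemma my_integral_comp_mul_left_Iic (g : ℝ → ℝ) (a : ℝ) {b : ℝ} (hb : 0 < b) :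
    (∫ x in Iic a, g (b * x)) = b⁻¹ • ∫ x in Iic (b * a), g x := by
  have : ∀ c : ℝ, MeasurableSet (Iic c) := fun c => measurableSet_Iic
  rw [← integral_indicator (this a), ← integral_indicator (this (b * a)),
    ← abs_of_pos (inv_pos.mpr hb), ← Measure.integral_comp_mul_left]
  congr
  ext1 x
  rw [← indicator_comp_right, (preimage_const_mul_Iic₀ (b * a) hb : HMul.hMul b ⁻¹' Iic (b * a) = _),
    mul_div_cancel_left₀ _ hb.ne']
  rfl

lemma my_integrableOn_exp_mul_Iic {q : ℝ} (hq : 0 < q) (c : ℝ) :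
    IntegrableOn (fun y : ℝ => Real.exp (q * y)) (Iic c) := by
  have h := integrableOn_exp_Iic (q * c)
  rw [← integrable_indicator_iff measurableSet_Iic] at h ⊢
  have h2 := (integrable_comp_mul_left_iff ((Iic (q * c)).indicator Real.exp) hq.ne').mpr h
  refine (integrable_congr ?_).mp h2
  refine ae_of_all _ fun x => ?_
  symm
  beta_reduce
  rw [← indicator_comp_right, (preimage_const_mul_Iic₀ (q * c) hq : HMul.hMul q ⁻¹' Iic (q * c) = _),
    mul_div_cancel_left₀ _ hq.ne']
  rfl

lemma my_integral_exp_mul_Iic {q : ℝ} (hq : 0 < q) (c : ℝ) :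
    ∫ y in Iic c, q * Real.exp (q * y) = Real.exp (q * c) := by
  rw [integral_const_mul, my_integral_comp_mul_left_Iic Real.exp c hq,
    integral_exp_Iic, smul_eq_mul, ← mul_assoc, mul_inv_cancel₀ hq.ne', one_mul]

lemma my_lintegral_exp_mul_Iic {q : ℝ} (hq : 0 < q) (c : ℝ) :
    ∫⁻ y in Iic c, ENNReal.ofReal (q * Real.exp (q * y)) = ENNReal.ofReal (Real.exp (q * c)) := by
  rw [← ofReal_integral_eq_lintegral_ofReal ((my_integrableOn_exp_mul_Iic hq c).const_mul q)
    (ae_of_all _ fun y => by positivity), my_integral_exp_mul_Iic hq c]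


lemma lplus_bound (q : ℝ) (hq : 0 ≤ q) (φ : ℝ → ℂ) (hφ : Integrable φ) :
    ∫ y, ‖Lplus q φ y‖ ≤ 2 * ∫ y, ‖φ y‖ := by
  rcases hq.eq_or_lt with rfl | hq
  · have h0 : (fun y => ‖Lplus 0 φ y‖) = fun y => ‖φ y‖ := by
      funext y; simp [Lplus]
    rw [h0]
    have := integral_nonneg (μ := (volume : Measure ℝ)) (f := fun y : ℝ => ‖φ y‖) (fun y : ℝ => norm_nonneg (φ y))
    linarith
  -- q > 0
  set ψ : ℝ → ℝ := fun z => ‖φ z‖ with hψdef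
  set w : ℝ → ℝ := fun z => Real.exp (q * |z|) * ψ z with hwdef
  set G : ℝ → ℝ := (Iio (0:ℝ)).indicator
      (fun y => q * Real.exp (q * y) * ∫ z in Ioc y (-y), w z) with hGdef
  -- pointwise bound
  have hpt : ∀ y, ‖Lplus q φ y‖ ≤ ψ y + G y := by
    intro y
    by_cases hy : y < 0
    · have h1 : ‖Lplus q φ y‖ ≤ ‖φ y‖ + ‖(if y < 0 then (1:ℂ) else 0) * (q:ℂ) *
          (Real.exp (q * y) : ℂ) * ∫ z in y..(-y), (Real.exp (q * |z|) : ℂ) * φ z‖ :=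
        norm_sub_le _ _
      refine h1.trans ?_
      rw [if_pos hy, one_mul, hGdef, indicator_of_mem (show y ∈ Iio (0:ℝ) from hy) _]
      gcongr
      rw [norm_mul, norm_mul, Complex.norm_real, Complex.norm_real,
        Real.norm_eq_abs, Real.norm_eq_abs, abs_of_pos hq, abs_of_pos (Real.exp_pos _)]
      have hle : y ≤ -y := by linarith
      rw [mul_assoc, mul_assoc]
      gcongr
      rw [intervalIntegral.integral_of_le hle]
      refine (norm_integral_le_integral_norm _).trans_eq ?_
      refine integral_congr_ae (ae_of_all _ fun z => ?_)
      show ‖(Real.exp (q * |z|) : ℂ) * φ z‖ = w z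
      rw [norm_mul, Complex.norm_real, Real.norm_eq_abs, abs_of_pos (Real.exp_pos _)]
    · have : G y = 0 := indicator_of_notMem (show y ∉ Iio (0:ℝ) from hy) _
      rw [this, add_zero]
      simp [Lplus, hy, hψdef]
  -- measurable representative
  obtain ⟨φ', hφ'meas, hφ'ae⟩ : ∃ φ' : ℝ → ℂ, StronglyMeasurable φ' ∧ φ =ᵐ[volume] φ' :=
    ⟨hφ.1.mk φ, hφ.1.stronglyMeasurable_mk, hφ.1.ae_eq_mk⟩
  set w' : ℝ → ℝ := fun z => Real.exp (q * |z|) * ‖φ' z‖ with hw'def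
  have hw'meas : Measurable w' :=
    ((measurable_abs.const_mul q).exp).mul hφ'meas.measurable.norm
  have hww' : w =ᵐ[volume] w' := hφ'ae.mono fun z hz => by
    rw [hwdef, hw'def]; simp only [hψdef]; rw [hz]
  have hw'nn : ∀ z, 0 ≤ w' z := fun z => mul_nonneg (Real.exp_pos _).le (norm_nonneg _)
  -- integrability of w on the relevant intervals
  have hw_int : ∀ y : ℝ, IntegrableOn w (Ioc y (-y)) volume := by
    intro y
    refine Integrable.mono ((hφ.norm.const_mul (Real.exp (-(q * y)))).integrableOn) ?_ ?_
    · exact (((measurable_abs.const_mul q).exp).aestronglyMeasurable.mul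
        hφ.1.norm).restrict
    · refine (ae_restrict_mem measurableSet_Ioc).mono fun z hz => ?_
      have habs : |z| ≤ -y := abs_le.2 ⟨by linarith [hz.1], hz.2⟩
      have h1 : q * |z| ≤ -(q * y) := by nlinarith
      rw [Real.norm_eq_abs, Real.norm_eq_abs, hwdef]
      simp only [hψdef]
      rw [_root_.abs_of_nonneg (mul_nonneg (Real.exp_pos _).le (norm_nonneg _)),
        _root_.abs_of_nonneg (mul_nonneg (Real.exp_pos _).le (norm_nonneg _))]
      exact mul_le_mul_of_nonneg_right (Real.exp_le_exp.2 h1) (norm_nonneg _)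
  have hw'_int : ∀ y : ℝ, IntegrableOn w' (Ioc y (-y)) volume :=
    fun y => (hw_int y).congr (ae_restrict_of_ae hww')
  set A' : ℝ → ℝ := fun y => ∫ z in Ioc y (-y), w' z with hA'def
  have hAA' : ∀ y : ℝ, (∫ z in Ioc y (-y), w z) = A' y :=
    fun y => integral_congr_ae (ae_restrict_of_ae hww')
  -- strong measurability of A'
  have hA'sm : StronglyMeasurable A' := by
    have hS : MeasurableSet {p : ℝ × ℝ | p.1 < p.2 ∧ p.2 ≤ -p.1} :=
      (measurableSet_lt measurable_fst measurable_snd).inter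
        (measurableSet_le measurable_snd measurable_fst.neg)
    have hF : StronglyMeasurable fun p : ℝ × ℝ =>
        Set.indicator {p : ℝ × ℝ | p.1 < p.2 ∧ p.2 ≤ -p.1} (fun p => w' p.2) p :=
      ((hw'meas.comp measurable_snd).indicator hS).stronglyMeasurable
    have h2 := hF.integral_prod_right' (ν := volume)
    convert h2 using 1
    funext y
    show (∫ z in Ioc y (-y), w' z) = _
    rw [← integral_indicator measurableSet_Ioc]
    refine integral_congr_ae (ae_of_all _ fun z => ?_)
    simp only [Set.indicator_apply, Set.mem_Ioc, Set.mem_setOf_eq]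
  have hGA : G = (Iio (0:ℝ)).indicator (fun y => q * Real.exp (q * y) * A' y) := by
    funext y
    by_cases hy : y ∈ Iio (0:ℝ)
    · rw [hGdef, indicator_of_mem hy, indicator_of_mem hy, hAA']
    · rw [hGdef, indicator_of_notMem hy, indicator_of_notMem hy]
  have hGmeas : Measurable G := by
    rw [hGA]
    exact (((measurable_id.const_mul q).exp.const_mul q).mul hA'sm.measurable).indicator
      measurableSet_Iio
  have hGnn : ∀ y, 0 ≤ G y := by
    intro y
    refine indicator_nonneg (fun y _ => ?_) y
    refine mul_nonneg (mul_nonneg hq.le (Real.exp_pos _).le) ?_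
    exact setIntegral_nonneg measurableSet_Ioc fun z _ =>
      mul_nonneg (Real.exp_pos _).le (norm_nonneg _)
  -- the key lintegral bound
  have hGlint : ∫⁻ y, ENNReal.ofReal (G y) ≤ ENNReal.ofReal (∫ z, ψ z) := by
    classical
    set S : Set (ℝ × ℝ) := {p : ℝ × ℝ | p.1 < 0 ∧ p.1 < p.2 ∧ p.2 ≤ -p.1} with hSdef
    have hSmeas : MeasurableSet S := by
      have : S = {p : ℝ × ℝ | p.1 < 0} ∩ ({p : ℝ × ℝ | p.1 < p.2} ∩ {p : ℝ × ℝ | p.2 ≤ -p.1}) := rfl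
      rw [this]
      exact (measurableSet_lt measurable_fst measurable_const).inter
        ((measurableSet_lt measurable_fst measurable_snd).inter
          (measurableSet_le measurable_snd measurable_fst.neg))
    set K : ℝ × ℝ → ENNReal := S.indicator
      (fun p => ENNReal.ofReal (q * Real.exp (q * p.1)) * ENNReal.ofReal (w' p.2)) with hKdef
    have hKmeas : Measurable K := by
      refine Measurable.indicator ?_ hSmeas
      exact (((measurable_fst.const_mul q).exp.const_mul q).ennreal_ofReal).mul
        ((hw'meas.comp measurable_snd).ennreal_ofReal)
    have step1 : ∀ y, ENNReal.ofReal (G y) = ∫⁻ z, K (y, z) := by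
      intro y
      by_cases hy : y < 0
      · rw [hGA, indicator_of_mem (show y ∈ Iio (0:ℝ) from hy)]
        have hc : 0 ≤ q * Real.exp (q * y) := by positivity
        rw [ENNReal.ofReal_mul hc,
          show A' y = ∫ z in Ioc y (-y), w' z from rfl,
          ofReal_integral_eq_lintegral_ofReal (hw'_int y) (ae_of_all _ fun z => hw'nn z),
          ← lintegral_const_mul' _ _ ENNReal.ofReal_ne_top,
          ← lintegral_indicator measurableSet_Ioc]
        refine lintegral_congr fun z => ?_
        simp only [hKdef, hSdef, Set.indicator_apply, Set.mem_Ioc, Set.mem_setOf_eq, hy, true_and]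
      · have hG0 : G y = 0 := by
          rw [hGA]; exact indicator_of_notMem (by simpa using hy) _
        have hK0 : ∀ z, K (y, z) = 0 := fun z => by
          simp only [hKdef, hSdef, Set.indicator_apply, Set.mem_setOf_eq]
          rw [if_neg (fun h => hy h.1)]
        simp [hG0, hK0]
    calc ∫⁻ y, ENNReal.ofReal (G y) = ∫⁻ y, ∫⁻ z, K (y, z) := lintegral_congr step1
      _ = ∫⁻ z, ∫⁻ y, K (y, z) := lintegral_lintegral_swap hKmeas.aemeasurable
      _ ≤ ∫⁻ z, ENNReal.ofReal (Real.exp (-(q * |z|))) * ENNReal.ofReal (w' z) := by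
          refine lintegral_mono fun z => ?_
          calc ∫⁻ y, K (y, z)
              ≤ ∫⁻ y, (Iic (-|z|)).indicator
                  (fun y => ENNReal.ofReal (q * Real.exp (q * y))) y * ENNReal.ofReal (w' z) := by
                refine lintegral_mono fun y => ?_
                simp only [hKdef, hSdef, Set.indicator_apply, Set.mem_setOf_eq, Set.mem_Iic]
                split_ifs with h1 h2
                · exact le_refl _
                · exfalso
                  apply h2
                  rcases abs_cases z with h | h
                  · rw [h.1]; linarith [h1.2.2]
                  · rw [h.1]; linarith [h1.2.1]
                · exact bot_le
                · exact bot_le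
            _ = (∫⁻ y in Iic (-|z|), ENNReal.ofReal (q * Real.exp (q * y)))
                  * ENNReal.ofReal (w' z) := by
                rw [lintegral_mul_const' _ _ ENNReal.ofReal_ne_top,
                  lintegral_indicator measurableSet_Iic]
            _ = ENNReal.ofReal (Real.exp (-(q * |z|))) * ENNReal.ofReal (w' z) := by
                rw [my_lintegral_exp_mul_Iic hq, mul_neg]
      _ = ∫⁻ z, ENNReal.ofReal ‖φ' z‖ := by
          refine lintegral_congr fun z => ?_
          rw [← ENNReal.ofReal_mul (Real.exp_pos _).le]
          congr 1
          show Real.exp (-(q * |z|)) * (Real.exp (q * |z|) * ‖φ' z‖) = ‖φ' z‖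
          rw [← mul_assoc, ← Real.exp_add, neg_add_cancel, Real.exp_zero, one_mul]
      _ = ∫⁻ z, ENNReal.ofReal ‖φ z‖ :=
          lintegral_congr_ae (hφ'ae.mono fun z hz => by simp only [hz])
      _ = ENNReal.ofReal (∫ z, ψ z) :=
          (ofReal_integral_eq_lintegral_ofReal hφ.norm
            (ae_of_all _ fun z => norm_nonneg _)).symm
  have hGint : Integrable G := by
    refine ⟨hGmeas.aestronglyMeasurable, ?_⟩
    show (∫⁻ y, ‖G y‖ₑ) < ⊤
    have heq : (fun y => ‖G y‖ₑ) = fun y => ENNReal.ofReal (G y) :=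
      funext fun y => Real.enorm_eq_ofReal (hGnn y)
    rw [heq]
    exact lt_of_le_of_lt hGlint ENNReal.ofReal_lt_top
  have hGle : (∫ y, G y) ≤ ∫ z, ψ z := by
    rw [integral_eq_lintegral_of_nonneg_ae (ae_of_all _ hGnn) hGmeas.aestronglyMeasurable]
    have h := ENNReal.toReal_mono ENNReal.ofReal_ne_top hGlint
    rwa [ENNReal.toReal_ofReal (integral_nonneg fun z => norm_nonneg _)] at h
  calc ∫ y, ‖Lplus q φ y‖ ≤ ∫ y, (ψ y + G y) :=
        integral_mono_of_nonneg (ae_of_all _ fun y => norm_nonneg _) (hφ.norm.add hGint)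
          (ae_of_all _ hpt)
    _ = (∫ y, ψ y) + ∫ y, G y := integral_add hφ.norm hGint
    _ ≤ 2 * ∫ y, ψ y := by linarith

lemma lminus_eq_lplus_neg (q : ℝ) (φ : ℝ → ℂ) (y : ℝ) :
    Lminus q φ y = Lplus q (fun z => φ (-z)) (-y) := by
  unfold Lminus Lplus
  have hint : (∫ z in (-y)..(-(-y)), (Real.exp (q * |z|) : ℂ) * φ (-z))
      = ∫ z in (-y)..y, (Real.exp (q * |z|) : ℂ) * φ z := by
    rw [neg_neg]
    have h := intervalIntegral.integral_comp_neg (a := -y) (b := y)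
      (fun z => (Real.exp (q * |z|) : ℂ) * φ z)
    simpa [abs_neg] using h
  rw [hint]
  simp only [neg_neg, mul_neg]
  rcases lt_trichotomy y 0 with hy | hy | hy
  · rw [if_neg (not_le.2 hy), if_neg (by simp; linarith)]
  · subst hy
    simp [intervalIntegral.integral_same]
  · rw [if_pos hy.le, if_pos (by simpa using hy)]

lemma lminus_bound (q : ℝ) (hq : 0 ≤ q) (φ : ℝ → ℂ) (hφ : Integrable φ) :
    ∫ y, ‖Lminus q φ y‖ ≤ 2 * ∫ y, ‖φ y‖ := by
  have h1 : (∫ y, ‖Lminus q φ y‖) = ∫ y, ‖Lplus q (fun z => φ (-z)) (-y)‖ := by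
    simp_rw [lminus_eq_lplus_neg q φ]
  rw [h1, integral_neg_eq_self (fun u => ‖Lplus q (fun z => φ (-z)) u‖) volume]
  have h2 := lplus_bound q hq (fun z => φ (-z)) hφ.comp_neg
  rwa [integral_neg_eq_self (fun z => ‖φ z‖) volume] at h2

theorem propagator_dispersive_estimate (q t : ℝ) (hq : 0 ≤ q) (ht : 0 < t)
    (φ : ℝ → ℂ) (hφ : Integrable φ) (x : ℝ) :
    ‖Uq q t φ x‖ ≤ Real.sqrt (2 / π) * (Real.sqrt t)⁻¹ * ∫ y : ℝ, ‖φ y‖ := by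
  have hπ : (0:ℝ) < π := Real.pi_pos
  have hsq : (0:ℝ) < Real.sqrt (2 * π) := Real.sqrt_pos.2 (by positivity)
  -- norm of the constant prefactor
  have hc1 : ‖Complex.exp (-(I * (π:ℂ) / 4)) / ((Real.sqrt (2 * π) : ℝ) : ℂ)‖
      = (Real.sqrt (2 * π))⁻¹ := by
    rw [norm_div, Complex.norm_exp]
    have hre : (-(I * (π:ℂ) / 4)).re = 0 := by simp
    rw [hre, Real.exp_zero, Complex.norm_real, Real.norm_eq_abs,
      abs_of_pos hsq, one_div]
  have hc2 : ‖(((Real.sqrt t : ℝ)) : ℂ)⁻¹‖ = (Real.sqrt t)⁻¹ := by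
    rw [norm_inv, Complex.norm_real, Real.norm_eq_abs,
      abs_of_pos (Real.sqrt_pos.2 ht)]
  -- oscillatory kernel has modulus one
  have hker : ∀ (L : ℝ → ℂ),
      ‖∫ y : ℝ, Complex.exp (I * ((x : ℂ) - y) ^ 2 / (2 * t)) * L y‖ ≤ ∫ y : ℝ, ‖L y‖ := by
    intro L
    refine (norm_integral_le_integral_norm _).trans_eq ?_
    refine integral_congr_ae (ae_of_all _ fun y => ?_)
    show ‖Complex.exp (I * ((x : ℂ) - y) ^ 2 / (2 * t)) * L y‖ = ‖L y‖
    rw [norm_mul]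
    have h1 : I * ((x : ℂ) - y) ^ 2 / (2 * t) = (((x - y) ^ 2 / (2 * t) : ℝ) : ℂ) * I := by
      push_cast; ring
    rw [h1, Complex.norm_exp_ofReal_mul_I, one_mul]
  -- the constant identity
  have hid : Real.sqrt (2 / π) = 2 * (Real.sqrt (2 * π))⁻¹ := by
    have h4 : (2 / π : ℝ) = 4 / (2 * π) := by
      rw [div_eq_div_iff hπ.ne' (by positivity)]; ring
    rw [h4, Real.sqrt_div (by norm_num : (0:ℝ) ≤ 4),
      show (4:ℝ) = 2^2 by norm_num, Real.sqrt_sq (by norm_num : (0:ℝ) ≤ 2), div_eq_mul_inv]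
  -- main estimate
  unfold Uq
  rw [norm_mul, norm_mul, hc1, hc2]
  have hφn : (0:ℝ) ≤ ∫ y, ‖φ y‖ := integral_nonneg fun y => norm_nonneg _
  split_ifs with hx
  · have hL := (hker (Lplus q φ)).trans (lplus_bound q hq φ hφ)
    calc (Real.sqrt (2 * π))⁻¹ * (Real.sqrt t)⁻¹ *
          ‖∫ y : ℝ, Complex.exp (I * ((x : ℂ) - y) ^ 2 / (2 * t)) * Lplus q φ y‖
        ≤ (Real.sqrt (2 * π))⁻¹ * (Real.sqrt t)⁻¹ * (2 * ∫ y, ‖φ y‖) := by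
          refine mul_le_mul_of_nonneg_left hL (by positivity)
      _ = Real.sqrt (2 / π) * (Real.sqrt t)⁻¹ * ∫ y : ℝ, ‖φ y‖ := by
          rw [hid]; ring
  · have hL := (hker (Lminus q φ)).trans (lminus_bound q hq φ hφ)
    calc (Real.sqrt (2 * π))⁻¹ * (Real.sqrt t)⁻¹ *
          ‖∫ y : ℝ, Complex.exp (I * ((x : ℂ) - y) ^ 2 / (2 * t)) * Lminus q φ y‖
        ≤ (Real.sqrt (2 * π))⁻¹ * (Real.sqrt t)⁻¹ * (2 * ∫ y, ‖φ y‖) := by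
          refine mul_le_mul_of_nonneg_left hL (by positivity)
      _ = Real.sqrt (2 / π) * (Real.sqrt t)⁻¹ * ∫ y : ℝ, ‖φ y‖ := by
          rw [hid]; ring
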